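/- Let μ be a real number with μ ≠ 0 and μ ≠ 1. There exists a four times continuously differentiable function u : [0,1] → ℂ, not identically zero, satisfying u''''(x) + (μ² − μ)·u''(x) + (μ − μ³)·u(x) = 0 on [0,1] with boundary conditions u(0) = u(1) = 0 and u''(0) = u''(1) = 0, if and only if there exists a positive integer k such that k⁴π⁴ − (μ² − μ)·k²π² + (μ − μ³) = 0. -/

import Mathlib

open Real Set


private lemma wse_const {f : ℝ → ℂ}
    (hf : ∀ x ∈ Icc (0:ℝ) 1, HasDerivWithinAt f 0 (Icc (0:ℝ) 1) x) :
    ∀ x ∈ Icc (0:ℝ) 1, f x = f 0 := by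
  apply constant_of_derivWithin_zero
  · exact fun x hx => (hf x hx).differentiableWithinAt
  · intro x hx
    exact (hf x (Ico_subset_Icc_self hx)).derivWithin
      ((uniqueDiffOn_Icc (by norm_num : (0:ℝ) < 1)) x (Ico_subset_Icc_self hx))

private lemma wse_ofReal_deriv (x : ℝ) : HasDerivAt (fun y : ℝ => (y : ℂ)) 1 x := by
  simpa using (hasDerivAt_id (x : ℂ)).comp_ofReal

private lemma wse_exp_deriv (r : ℂ) (x : ℝ) :
    HasDerivAt (fun y : ℝ => Complex.exp (r * y)) (r * Complex.exp (r * x)) x := by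
  have hlin : HasDerivAt (fun z : ℂ => r * z) r (x : ℂ) := by
    simpa using (hasDerivAt_id (x : ℂ)).const_mul r
  have h : HasDerivAt (fun z : ℂ => Complex.exp (r * z)) (r * Complex.exp (r * x)) (x : ℂ) := by
    exact ((Complex.hasDerivAt_exp (r * x)).comp (x : ℂ) hlin).congr_deriv (by ring)
  exact h.comp_ofReal

private lemma wse_second_order {v w : ℝ → ℂ} {X : ℂ}
    (hv : ∀ x ∈ Icc (0:ℝ) 1, HasDerivWithinAt v (w x) (Icc (0:ℝ) 1) x)
    (hw : ∀ x ∈ Icc (0:ℝ) 1, HasDerivWithinAt w (X * v x) (Icc (0:ℝ) 1) x)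
    (h0 : v 0 = 0) (h1 : v 1 = 0) (hne : ∃ x ∈ Icc (0:ℝ) 1, v x ≠ 0) :
    ∃ k : ℕ, 1 ≤ k ∧ X = -((k : ℂ) * (π : ℂ)) ^ 2 := by
  obtain ⟨r, hr⟩ : ∃ r : ℂ, r ^ 2 = X := IsAlgClosed.exists_pow_nat_eq X (by norm_num)
  have hF : ∀ x ∈ Icc (0:ℝ) 1,
      HasDerivWithinAt (fun x : ℝ => (w x - r * v x) * Complex.exp (r * x)) 0
        (Icc (0:ℝ) 1) x := by
    intro x hx
    have h := ((hw x hx).sub ((hv x hx).const_mul r)).mul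
      ((wse_exp_deriv r x).hasDerivWithinAt)
    refine h.congr_deriv ?_
    rw [← hr]; simp only [Pi.sub_apply]; ring
  obtain ⟨c, hFc⟩ : ∃ c : ℂ, ∀ x ∈ Icc (0:ℝ) 1,
      (w x - r * v x) * Complex.exp (r * x) = c := by
    refine ⟨(w 0 - r * v 0) * Complex.exp (r * (0:ℝ)), ?_⟩
    exact wse_const hF
  by_cases hr0 : r = 0
  · -- X = 0 case: leads to contradiction with hne and h1
    exfalso
    have hwc : ∀ x ∈ Icc (0:ℝ) 1, w x = c := by
      intro x hx
      have := hFc x hx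
      simpa [hr0] using this
    have hG : ∀ x ∈ Icc (0:ℝ) 1,
        HasDerivWithinAt (fun y : ℝ => v y - c * y) 0 (Icc (0:ℝ) 1) x := by
      intro x hx
      have h := (hv x hx).sub (((wse_ofReal_deriv x).const_mul c).hasDerivWithinAt)
      simp [hwc x hx] at h
      exact h
    have hGc := wse_const hG
    have hc0 : c = 0 := by
      have h := hGc 1 (by norm_num)
      rw [h1, h0] at h
      simpa using h
    obtain ⟨x0, hx0, hvx0⟩ := hne
    apply hvx0
    have h := hGc x0 hx0
    rw [h0, hc0] at h
    simpa using h
  · -- r ≠ 0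
    have hG : ∀ x ∈ Icc (0:ℝ) 1,
        HasDerivWithinAt
          (fun y : ℝ => 2 * r * (v y * Complex.exp (-r * y)) + c * Complex.exp (-(2*r) * y)) 0
          (Icc (0:ℝ) 1) x := by
      intro x hx
      have h := ((((hv x hx).mul ((wse_exp_deriv (-r) x).hasDerivWithinAt)).const_mul
        (2 * r)).add (((wse_exp_deriv (-(2*r)) x).hasDerivWithinAt).const_mul c))
      have hc := hFc x hx
      have hee : Complex.exp (r * (x:ℝ)) * Complex.exp (-r * (x:ℝ)) = 1 := by
        rw [← Complex.exp_add]; ring_nf; exact Complex.exp_zero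
      have hee2 : Complex.exp (-(2 * r) * ((x:ℝ):ℂ)) =
          Complex.exp (-r * (x:ℝ)) * Complex.exp (-r * (x:ℝ)) := by
        rw [← Complex.exp_add]; ring_nf
      refine h.congr_deriv ?_
      symm
      linear_combination (-(2*r*Complex.exp (-r * (x:ℝ))^2)) * hc
        + (2*r*(w x - r * v x)*Complex.exp (-r * (x:ℝ))) * hee
        + (2*r*c) * hee2
    have hGc := wse_const hG
    have hvx : ∀ x ∈ Icc (0:ℝ) 1,
        2 * r * v x = c * (Complex.exp (r * x) - Complex.exp (-r * x)) := by
      intro x hx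
      have h := hGc x hx
      rw [h0] at h
      have hee : Complex.exp (r * (x:ℝ)) * Complex.exp (-r * (x:ℝ)) = 1 := by
        rw [← Complex.exp_add]; ring_nf; exact Complex.exp_zero
      have hee2 : Complex.exp (-(2 * r) * ((x:ℝ):ℂ)) =
          Complex.exp (-r * (x:ℝ)) * Complex.exp (-r * (x:ℝ)) := by
        rw [← Complex.exp_add]; ring_nf
      have h00 : Complex.exp (-(2 * r) * ((0:ℝ):ℂ)) = 1 := by
        simp
      rw [hee2, h00] at h
      -- h : 2r v x Q + c Q² = 0 + c
      linear_combination Complex.exp (r * (x:ℝ)) * h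
        + (-(2*r*v x) - c * Complex.exp (-r*(x:ℝ))) * hee
    obtain ⟨x0, hx0, hvx0⟩ := hne
    have hcne : c ≠ 0 := by
      intro hc
      apply hvx0
      have h2 := hvx x0 hx0
      rw [hc, zero_mul] at h2
      rcases mul_eq_zero.1 h2 with h' | h'
      · exact absurd h' (by simpa using hr0)
      · exact h'
    have hexp : Complex.exp (r * (1:ℝ)) - Complex.exp (-r * (1:ℝ)) = 0 := by
      have h := hvx 1 (by norm_num)
      rw [h1] at h
      have h' : c * (Complex.exp (r * (1:ℝ)) - Complex.exp (-r * (1:ℝ))) = 0 :=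
        h.symm.trans (by ring)
      exact (mul_eq_zero.1 h').resolve_left hcne
    have hexp1 : Complex.exp (r + r) = 1 := by
      have he : Complex.exp (r * (1:ℝ)) = Complex.exp (-r * (1:ℝ)) := by
        linear_combination hexp
      have hprod : Complex.exp (r * (1:ℝ)) * Complex.exp (-r * (1:ℝ)) = 1 := by
        rw [← Complex.exp_add]; ring_nf; exact Complex.exp_zero
      rw [← he] at hprod
      calc Complex.exp (r + r) = Complex.exp (r * (1:ℝ)) * Complex.exp (r * (1:ℝ)) := by
            rw [← Complex.exp_add]; norm_num
        _ = 1 := hprod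
    obtain ⟨n, hn⟩ := Complex.exp_eq_one_iff.1 hexp1
    have hrn : r = n * π * Complex.I := by linear_combination hn / 2
    have hn0 : n ≠ 0 := by
      intro h; apply hr0; rw [hrn, h]; simp
    refine ⟨n.natAbs, Nat.one_le_iff_ne_zero.2 (by simpa using hn0), ?_⟩
    have hcast : ((n.natAbs : ℂ)) ^ 2 = (n : ℂ) ^ 2 := by
      have h2 := congrArg (fun m : ℤ => (m : ℂ)) (Int.natAbs_sq n)
      push_cast at h2
      rwa [Int.abs_eq_natAbs, Int.cast_natCast] at h2
    rw [← hr, hrn]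
    linear_combination ((n:ℂ))^2 * (π:ℂ)^2 * Complex.I_sq + (π:ℂ)^2 * hcast


private lemma wse_iter2 {f : ℝ → ℂ} {x : ℝ} (hx : x ∈ Icc (0:ℝ) 1) :
    iteratedDerivWithin 2 f (Icc (0:ℝ) 1) x
      = derivWithin (derivWithin f (Icc (0:ℝ) 1)) (Icc (0:ℝ) 1) x := by
  have hs : UniqueDiffOn ℝ (Icc (0:ℝ) 1) := uniqueDiffOn_Icc (by norm_num)
  calc iteratedDerivWithin 2 f (Icc (0:ℝ) 1) x
      = iteratedDerivWithin (1+1) f (Icc (0:ℝ) 1) x := by norm_num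
    _ = iteratedDerivWithin 1 (derivWithin f (Icc (0:ℝ) 1)) (Icc (0:ℝ) 1) x :=
        congrFun iteratedDerivWithin_succ' x
    _ = iteratedDerivWithin (0+1) (derivWithin f (Icc (0:ℝ) 1)) (Icc (0:ℝ) 1) x := by norm_num
    _ = iteratedDerivWithin 0 (derivWithin (derivWithin f (Icc (0:ℝ) 1)) (Icc (0:ℝ) 1))
          (Icc (0:ℝ) 1) x := congrFun iteratedDerivWithin_succ' x
    _ = _ := by rw [iteratedDerivWithin_zero]

private lemma wse_iter4 {f : ℝ → ℂ} {x : ℝ} (hx : x ∈ Icc (0:ℝ) 1) :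
    iteratedDerivWithin 4 f (Icc (0:ℝ) 1) x
      = derivWithin (derivWithin (derivWithin (derivWithin f (Icc (0:ℝ) 1)) (Icc (0:ℝ) 1))
          (Icc (0:ℝ) 1)) (Icc (0:ℝ) 1) x := by
  have hs : UniqueDiffOn ℝ (Icc (0:ℝ) 1) := uniqueDiffOn_Icc (by norm_num)
  calc iteratedDerivWithin 4 f (Icc (0:ℝ) 1) x
      = iteratedDerivWithin (3+1) f (Icc (0:ℝ) 1) x := by norm_num
    _ = iteratedDerivWithin 3 (derivWithin f (Icc (0:ℝ) 1)) (Icc (0:ℝ) 1) x :=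
        congrFun iteratedDerivWithin_succ' x
    _ = iteratedDerivWithin (2+1) (derivWithin f (Icc (0:ℝ) 1)) (Icc (0:ℝ) 1) x := by norm_num
    _ = iteratedDerivWithin 2 (derivWithin (derivWithin f (Icc (0:ℝ) 1)) (Icc (0:ℝ) 1))
          (Icc (0:ℝ) 1) x := congrFun iteratedDerivWithin_succ' x
    _ = _ := wse_iter2 hx

/-- Eigenvalue equation for the conservative wave–Schrödinger coupled system: for real
`μ ≠ 0, 1`, the boundary value problem `u'''' + (μ² − μ)u'' + (μ − μ³)u = 0` on `[0,1]`,
`u(0) = u(1) = u''(0) = u''(1) = 0`, has a nonzero solution iff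
`k⁴π⁴ − (μ² − μ)k²π² + (μ − μ³) = 0` for some positive integer `k`. -/
theorem wave_schrodinger_eigenvalue_equation (μ : ℝ) (hμ0 : μ ≠ 0) (hμ1 : μ ≠ 1) :
    (∃ u : ℝ → ℂ,
      ContDiffOn ℝ 4 u (Icc 0 1) ∧
      (∃ x ∈ Icc (0:ℝ) 1, u x ≠ 0) ∧
      (∀ x ∈ Icc (0:ℝ) 1,
        iteratedDerivWithin 4 u (Icc 0 1) x
          + ((μ : ℂ) ^ 2 - (μ : ℂ)) * iteratedDerivWithin 2 u (Icc 0 1) x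
          + ((μ : ℂ) - (μ : ℂ) ^ 3) * u x = 0) ∧
      u 0 = 0 ∧ u 1 = 0 ∧
      iteratedDerivWithin 2 u (Icc 0 1) 0 = 0 ∧
      iteratedDerivWithin 2 u (Icc 0 1) 1 = 0) ↔
    ∃ k : ℕ, 1 ≤ k ∧
      (k : ℝ) ^ 4 * π ^ 4 - (μ ^ 2 - μ) * (k : ℝ) ^ 2 * π ^ 2 + (μ - μ ^ 3) = 0 := by
  constructor
  · rintro ⟨u, hu, hune, hODE0, hu0, hu1, hD20, hD21⟩
    have hs : UniqueDiffOn ℝ (Icc (0:ℝ) 1) := uniqueDiffOn_Icc (by norm_num)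
    set A : ℂ := (μ:ℂ)^2 - (μ:ℂ) with hAdef
    set B : ℂ := (μ:ℂ) - (μ:ℂ)^3 with hBdef
    set d1 : ℝ → ℂ := derivWithin u (Icc (0:ℝ) 1) with hd1def
    set d2 : ℝ → ℂ := derivWithin d1 (Icc (0:ℝ) 1) with hd2def
    set d3 : ℝ → ℂ := derivWithin d2 (Icc (0:ℝ) 1) with hd3def
    set d4 : ℝ → ℂ := derivWithin d3 (Icc (0:ℝ) 1) with hd4def
    have h1 : ∀ x ∈ Icc (0:ℝ) 1, HasDerivWithinAt u (d1 x) (Icc (0:ℝ) 1) x :=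
      fun x hx => ((hu.differentiableOn (by norm_num)) x hx).hasDerivWithinAt
    have hu1c : ContDiffOn ℝ 3 d1 (Icc (0:ℝ) 1) := hu.derivWithin hs (by norm_num)
    have h2 : ∀ x ∈ Icc (0:ℝ) 1, HasDerivWithinAt d1 (d2 x) (Icc (0:ℝ) 1) x :=
      fun x hx => ((hu1c.differentiableOn (by norm_num)) x hx).hasDerivWithinAt
    have hu2c : ContDiffOn ℝ 2 d2 (Icc (0:ℝ) 1) := hu1c.derivWithin hs (by norm_num)
    have h3 : ∀ x ∈ Icc (0:ℝ) 1, HasDerivWithinAt d2 (d3 x) (Icc (0:ℝ) 1) x :=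
      fun x hx => ((hu2c.differentiableOn (by norm_num)) x hx).hasDerivWithinAt
    have hu3c : ContDiffOn ℝ 1 d3 (Icc (0:ℝ) 1) := hu2c.derivWithin hs (by norm_num)
    have h4 : ∀ x ∈ Icc (0:ℝ) 1, HasDerivWithinAt d3 (d4 x) (Icc (0:ℝ) 1) x :=
      fun x hx => ((hu3c.differentiableOn (by norm_num)) x hx).hasDerivWithinAt
    have hI2 : ∀ x ∈ Icc (0:ℝ) 1, iteratedDerivWithin 2 u (Icc (0:ℝ) 1) x = d2 x := by
      intro x hx
      rw [wse_iter2 hx, hd2def, hd1def]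
    have hI4 : ∀ x ∈ Icc (0:ℝ) 1, iteratedDerivWithin 4 u (Icc (0:ℝ) 1) x = d4 x := by
      intro x hx
      rw [wse_iter4 hx, hd4def, hd3def, hd2def, hd1def]
    have hODE : ∀ x ∈ Icc (0:ℝ) 1, d4 x + A * d2 x + B * u x = 0 := by
      intro x hx
      have h := hODE0 x hx
      rw [hI2 x hx, hI4 x hx] at h
      exact h
    -- discriminant
    have hD : ((μ^2 - μ)^2 - 4*(μ - μ^3) : ℝ) ≠ 0 := by
      have h4 : (0:ℝ) < μ^2 + 3*μ + 4 := by nlinarith [sq_nonneg (μ + 3/2)]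
      have he : ((μ^2-μ)^2 - 4*(μ-μ^3) : ℝ) = μ*(μ-1)*(μ^2+3*μ+4) := by ring
      rw [he]
      exact mul_ne_zero (mul_ne_zero hμ0 (sub_ne_zero.2 hμ1)) (ne_of_gt h4)
    obtain ⟨s0, hs0⟩ : ∃ z : ℂ, z^2 = (((μ^2-μ)^2 - 4*(μ-μ^3) : ℝ) : ℂ) :=
      IsAlgClosed.exists_pow_nat_eq _ (by norm_num)
    have hs0ne : s0 ≠ 0 := by
      intro h
      apply hD
      have h2 : (((μ^2-μ)^2 - 4*(μ-μ^3) : ℝ) : ℂ) = 0 := by rw [← hs0, h]; ring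
      exact_mod_cast h2
    have hABs : s0^2 = A^2 - 4*B := by
      rw [hs0, hAdef, hBdef]; push_cast; ring
    set X₁ : ℂ := (-A + s0)/2 with hX1def
    set X₂ : ℂ := (-A - s0)/2 with hX2def
    have hsum : X₁ + X₂ = -A := by rw [hX1def, hX2def]; ring
    have hprod : X₁ * X₂ = B := by
      rw [hX1def, hX2def]
      have : (-A + s0)/2 * ((-A - s0)/2) = (A^2 - s0^2)/4 := by ring
      rw [this, hABs]; ring
    have claim : ∀ Y Z : ℂ, Y + Z = -A → Y * Z = B →
        (∃ x ∈ Icc (0:ℝ) 1, d2 x - Z * u x ≠ 0) →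
        ∃ k : ℕ, 1 ≤ k ∧
          (k : ℝ) ^ 4 * π ^ 4 - (μ ^ 2 - μ) * (k : ℝ) ^ 2 * π ^ 2 + (μ - μ ^ 3) = 0 := by
      rintro Y Z hYZ hYZ' hvne
      have hv : ∀ x ∈ Icc (0:ℝ) 1, HasDerivWithinAt (fun x => d2 x - Z * u x)
          (d3 x - Z * d1 x) (Icc (0:ℝ) 1) x :=
        fun x hx => (h3 x hx).sub ((h1 x hx).const_mul Z)
      have hw : ∀ x ∈ Icc (0:ℝ) 1, HasDerivWithinAt (fun x => d3 x - Z * d1 x)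
          (Y * (d2 x - Z * u x)) (Icc (0:ℝ) 1) x := by
        intro x hx
        have h := (h4 x hx).sub ((h2 x hx).const_mul Z)
        refine h.congr_deriv ?_
        symm
        linear_combination (-1 : ℂ) * (hODE x hx) + d2 x * hYZ + (- u x) * hYZ'
      have hbc0 : d2 0 - Z * u 0 = 0 := by
        have h := hI2 0 (by norm_num)
        rw [hD20] at h
        rw [← h, hu0]; ring
      have hbc1 : d2 1 - Z * u 1 = 0 := by
        have h := hI2 1 (by norm_num)
        rw [hD21] at h
        rw [← h, hu1]; ring
      obtain ⟨k, hk1, hkX⟩ := wse_second_order hv hw hbc0 hbc1 hvne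
      refine ⟨k, hk1, ?_⟩
      have hroot : Y^2 + A*Y + B = 0 := by linear_combination Y * hYZ - hYZ'
      rw [hkX] at hroot
      simp only [hAdef, hBdef] at hroot
      have hfin : (((k:ℝ)^4*π^4 - (μ^2-μ)*(k:ℝ)^2*π^2 + (μ-μ^3) : ℝ) : ℂ) = 0 := by
        push_cast
        linear_combination hroot
      exact_mod_cast hfin
    by_cases hvz : ∀ x ∈ Icc (0:ℝ) 1, d2 x - X₂ * u x = 0
    · obtain ⟨x0, hx0, hux0⟩ := hune
      refine claim X₂ X₁ (by linear_combination hsum) (by linear_combination hprod) ⟨x0, hx0, ?_⟩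
      intro hcon
      have h := hvz x0 hx0
      have hmul : (X₂ - X₁) * u x0 = 0 := by linear_combination hcon - h
      have hX : X₂ - X₁ ≠ 0 := by
        intro h'
        apply hs0ne
        rw [hX1def, hX2def] at h'
        linear_combination -h'
      rcases mul_eq_zero.1 hmul with h' | h'
      · exact hX h'
      · exact hux0 h'
    · push_neg at hvz
      exact claim X₁ X₂ hsum hprod hvz
  · rintro ⟨k, hk1, hk⟩
    have hs : UniqueDiffOn ℝ (Icc (0:ℝ) 1) := uniqueDiffOn_Icc (by norm_num)
    set c : ℝ := (k : ℝ) * π with hc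
    have hkpos : (0:ℝ) < (k:ℝ) := by exact_mod_cast hk1
    set u : ℝ → ℂ := fun x : ℝ => Complex.sin ((c:ℂ) * x) with hudef
    have hsin : ∀ x : ℝ, HasDerivAt u ((c:ℂ) * Complex.cos ((c:ℂ) * x)) x := by
      intro x
      have hlin : HasDerivAt (fun z : ℂ => (c:ℂ) * z) (c:ℂ) ((x:ℝ):ℂ) := by
        simpa using (hasDerivAt_id ((x:ℝ):ℂ)).const_mul (c:ℂ)
      have h := (Complex.hasDerivAt_sin ((c:ℂ) * x)).comp ((x:ℝ):ℂ) hlin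
      simpa [hudef, Function.comp, mul_comm] using h.comp_ofReal
    have hcos : ∀ x : ℝ, HasDerivAt (fun y : ℝ => Complex.cos ((c:ℂ) * y))
        (-(c:ℂ) * Complex.sin ((c:ℂ) * x)) x := by
      intro x
      have hlin : HasDerivAt (fun z : ℂ => (c:ℂ) * z) (c:ℂ) ((x:ℝ):ℂ) := by
        simpa using (hasDerivAt_id ((x:ℝ):ℂ)).const_mul (c:ℂ)
      have h := (Complex.hasDerivAt_cos ((c:ℂ) * x)).comp ((x:ℝ):ℂ) hlin
      have h2 := h.comp_ofReal
      simp only [Function.comp] at h2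
      convert h2 using 1
      ring
    have hcd : ContDiff ℝ 4 u := by
      have hinner : ContDiff ℝ 4 (fun x : ℝ => (c:ℂ) * (x:ℂ)) :=
        contDiff_const.mul Complex.ofRealCLM.contDiff
      exact (Complex.contDiff_sin.restrict_scalars ℝ).comp hinner
    -- derivWithin computations
    have hd1 : ∀ x ∈ Icc (0:ℝ) 1, derivWithin u (Icc (0:ℝ) 1) x
        = (c:ℂ) * Complex.cos ((c:ℂ) * x) :=
      fun x hx => ((hsin x).hasDerivWithinAt).derivWithin (hs x hx)
    have hd2 : ∀ x ∈ Icc (0:ℝ) 1, derivWithin (derivWithin u (Icc (0:ℝ) 1)) (Icc (0:ℝ) 1) x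
        = -(c:ℂ)^2 * Complex.sin ((c:ℂ) * x) := by
      intro x hx
      rw [derivWithin_congr (fun y hy => hd1 y hy) (hd1 x hx)]
      have h := ((hcos x).const_mul (c:ℂ)).hasDerivWithinAt.derivWithin (hs x hx)
      rw [h]; ring
    have hI2 : ∀ x ∈ Icc (0:ℝ) 1, iteratedDerivWithin 2 u (Icc (0:ℝ) 1) x
        = -(c:ℂ)^2 * Complex.sin ((c:ℂ) * x) := by
      intro x hx
      rw [wse_iter2 hx]; exact hd2 x hx
    have hd3 : ∀ x ∈ Icc (0:ℝ) 1,
        derivWithin (derivWithin (derivWithin u (Icc (0:ℝ) 1)) (Icc (0:ℝ) 1)) (Icc (0:ℝ) 1) x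
        = -(c:ℂ)^2 * ((c:ℂ) * Complex.cos ((c:ℂ) * x)) := by
      intro x hx
      rw [derivWithin_congr (fun y hy => hd2 y hy) (hd2 x hx)]
      have h := ((hsin x).const_mul (-(c:ℂ)^2)).hasDerivWithinAt.derivWithin (hs x hx)
      rw [h]
    have hd4 : ∀ x ∈ Icc (0:ℝ) 1,
        derivWithin (derivWithin (derivWithin (derivWithin u (Icc (0:ℝ) 1)) (Icc (0:ℝ) 1))
          (Icc (0:ℝ) 1)) (Icc (0:ℝ) 1) x = (c:ℂ)^4 * Complex.sin ((c:ℂ) * x) := by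
      intro x hx
      rw [derivWithin_congr (fun y hy => hd3 y hy) (hd3 x hx)]
      have h := (((hcos x).const_mul (c:ℂ)).const_mul (-(c:ℂ)^2)).hasDerivWithinAt.derivWithin
        (hs x hx)
      rw [h]; ring
    have hI4 : ∀ x ∈ Icc (0:ℝ) 1, iteratedDerivWithin 4 u (Icc (0:ℝ) 1) x
        = (c:ℂ)^4 * Complex.sin ((c:ℂ) * x) := by
      intro x hx
      rw [wse_iter4 hx]; exact hd4 x hx
    have hsinc : Complex.sin ((c:ℂ)) = 0 := by
      rw [show ((c:ℝ):ℂ) = (((k:ℝ) * π : ℝ) : ℂ) by rw [hc], ← Complex.ofReal_sin]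
      exact_mod_cast Real.sin_nat_mul_pi k
    refine ⟨u, hcd.contDiffOn, ?_, ?_, ?_, ?_, ?_, ?_⟩
    · -- nonzero at 1/(2k)
      refine ⟨1/(2*(k:ℝ)), ⟨by positivity, ?_⟩, ?_⟩
      · rw [div_le_one (by positivity)]
        have : (1:ℝ) ≤ (k:ℝ) := by exact_mod_cast hk1
        linarith
      · have hreal : c * (1/(2*(k:ℝ))) = π/2 := by
          rw [hc]
          field_simp
        have harg : (c:ℂ) * ((1/(2*(k:ℝ)) : ℝ) : ℂ) = ((π/2 : ℝ) : ℂ) := by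
          rw [← hreal]; push_cast; ring
        rw [hudef]
        simp only [harg]
        rw [← Complex.ofReal_sin, Real.sin_pi_div_two]
        norm_num
    · intro x hx
      rw [hI4 x hx, hI2 x hx]
      have hscalar : (c:ℂ)^4 - ((μ:ℂ)^2 - μ) * (c:ℂ)^2 + ((μ:ℂ) - (μ:ℂ)^3) = 0 := by
        have h := congrArg (fun t : ℝ => (t:ℂ)) hk
        push_cast at h
        rw [hc]
        push_cast
        linear_combination h
      rw [hudef]
      linear_combination Complex.sin ((c:ℂ) * x) * hscalar
    · rw [hudef]; simp
    · rw [hudef]; simpa using hsinc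
    · rw [hI2 0 (by norm_num)]
      simp
    · rw [hI2 1 (by norm_num)]
      simp [hsinc]
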